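/- arXiv:1903.06291 — 2 statements merged into one kernel-verified Lean document; each statement's English description precedes it below -/
import Mathlib

section
/- Fix α>1, β>1 and set A=(α−1)/(αβ−1), B=(β−1)/(αβ−1). For δ>0 and x₀>0 let s(x₀,δ)>0 denote the unique value such that the solution of the system dx/dt = x(1−x−αy), dy/dt = δy(1−y−βx) on [0,∞) with initial condition (x₀,s(x₀,δ)) converges to (A,B) as t→∞. Then for every fixed x₀>0, s(x₀,δ) → B as δ→0⁺; that is, as δ→0 the separatrix converges pointwise to the horizontal line y=B. -/
open Filter Set


/-- If the derivative is at most `C` on the interior, the increment is at most `C * (b-a)`. -/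
lemma sub_le_of_deriv_le' {f : ℝ → ℝ} {a b C : ℝ} (hab : a ≤ b)
    (hf : ContinuousOn f (Icc a b))
    (hd : ∀ t ∈ Ioo a b, ∃ d, HasDerivAt f d t ∧ d ≤ C) :
    f b - f a ≤ C * (b - a) := by
  rcases eq_or_lt_of_le hab with rfl | hab'
  · simp
  have hg : AntitoneOn (fun t => f t - C * t) (Icc a b) := by
    apply antitoneOn_of_deriv_nonpos (convex_Icc a b)
    · exact hf.sub (continuousOn_const.mul continuousOn_id)
    · intro t ht
      rw [interior_Icc] at ht
      obtain ⟨d, hdAt, _⟩ := hd t ht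
      exact ((hdAt.sub ((hasDerivAt_id t).const_mul C)).differentiableAt).differentiableWithinAt
    · intro t ht
      rw [interior_Icc] at ht
      obtain ⟨d, hdAt, hdC⟩ := hd t ht
      have : deriv (fun t => f t - C * t) t = d - C := by
        have h2 : HasDerivAt (fun t => f t - C * t) (d - C * 1) t :=
          hdAt.sub ((hasDerivAt_id t).const_mul C)
        rw [h2.deriv, mul_one]
      rw [this]; linarith
  have := hg (left_mem_Icc.2 hab) (right_mem_Icc.2 hab) hab
  simp only at this
  nlinarith

/-- Invariance: if `f a ≤ K` and the derivative is negative whenever `f ≥ K`,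
then `f ≤ K` on `[a,b]`. -/
lemma stay_le {f : ℝ → ℝ} {a b K : ℝ} (hab : a ≤ b)
    (hf : ContinuousOn f (Icc a b)) (hfa : f a ≤ K)
    (hd : ∀ t ∈ Ioo a b, K ≤ f t → ∃ d, HasDerivAt f d t ∧ d < 0) :
    ∀ t ∈ Icc a b, f t ≤ K := by
  intro t' ht'
  by_contra hlt
  push_neg at hlt
  set S : Set ℝ := {τ | τ ∈ Icc a t' ∧ f τ ≤ K} with hS
  have hScl : IsClosed S :=
    (hf.mono (Icc_subset_Icc le_rfl ht'.2)).preimage_isClosed_of_isClosed isClosed_Icc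
      isClosed_Iic
  have hSne : S.Nonempty := ⟨a, ⟨left_mem_Icc.2 ht'.1, hfa⟩⟩
  have hSbd : BddAbove S := ⟨t', fun τ hτ => hτ.1.2⟩
  set T := sSup S with hT
  have hTS : T ∈ S := hScl.csSup_mem hSne hSbd
  have hTt' : T < t' := lt_of_le_of_ne hTS.1.2 (fun h => by
    have := hTS.2; rw [h] at this; linarith)
  have hgt : ∀ τ ∈ Ioc T t', K < f τ := by
    intro τ hτ
    by_contra hle
    push_neg at hle
    have : τ ∈ S := ⟨⟨le_trans hTS.1.1 hτ.1.le, hτ.2⟩, hle⟩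
    exact absurd (le_csSup hSbd this) (not_le.2 hτ.1)
  have hanti : StrictAntiOn f (Icc T t') := by
    apply strictAntiOn_of_deriv_neg (convex_Icc T t')
    · exact hf.mono (Icc_subset_Icc hTS.1.1 ht'.2)
    · intro τ hτ
      rw [interior_Icc] at hτ
      have hτab : τ ∈ Ioo a b :=
        ⟨lt_of_le_of_lt hTS.1.1 hτ.1, lt_of_lt_of_le hτ.2 ht'.2⟩
      obtain ⟨d, hdAt, hdneg⟩ := hd τ hτab (le_of_lt (hgt τ ⟨hτ.1, hτ.2.le⟩))
      rw [hdAt.deriv]; exact hdneg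
  have := hanti (left_mem_Icc.2 hTt'.le) (right_mem_Icc.2 hTt'.le) hTt'
  have : f t' < f T := this
  linarith [hTS.2]

/-- Mirror: if `K ≤ f a` and the derivative is positive whenever `f ≤ K`,
then `K ≤ f` on `[a,b]`. -/
lemma stay_ge {f : ℝ → ℝ} {a b K : ℝ} (hab : a ≤ b)
    (hf : ContinuousOn f (Icc a b)) (hfa : K ≤ f a)
    (hd : ∀ t ∈ Ioo a b, f t ≤ K → ∃ d, HasDerivAt f d t ∧ 0 < d) :
    ∀ t ∈ Icc a b, K ≤ f t := by
  have h := stay_le (f := fun t => -f t) (K := -K) hab hf.neg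
    (show -f a ≤ -K by linarith)
    (fun t ht hK => by
      have hK' : f t ≤ K := by have : -K ≤ -f t := hK; linarith
      obtain ⟨d, hdAt, hdpos⟩ := hd t ht hK'
      exact ⟨-d, hdAt.neg, by linarith⟩)
  intro t ht
  have := h t ht
  have : -f t ≤ -K := this
  linarith

/-- Forced descent: with derivative at most `-D` while above `K`, the function
reaches `K` within time `(f a - K)/D`. -/
lemma reach_le {f : ℝ → ℝ} {a b K D : ℝ} (hab : a ≤ b) (hD : 0 < D)
    (hf : ContinuousOn f (Icc a b))
    (hd : ∀ t ∈ Ioo a b, K < f t → ∃ d, HasDerivAt f d t ∧ d ≤ -D)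
    (hlen : f a - K ≤ D * (b - a)) :
    ∃ t ∈ Icc a b, f t ≤ K := by
  by_contra h
  push_neg at h
  have hsub : f b - f a ≤ (-D) * (b - a) := by
    apply sub_le_of_deriv_le' hab hf
    intro t ht
    exact hd t ht (h t ⟨ht.1.le, ht.2.le⟩)
  have hb := h b (right_mem_Icc.2 hab)
  nlinarith

lemma reach_ge {f : ℝ → ℝ} {a b K D : ℝ} (hab : a ≤ b) (hD : 0 < D)
    (hf : ContinuousOn f (Icc a b))
    (hd : ∀ t ∈ Ioo a b, f t < K → ∃ d, HasDerivAt f d t ∧ D ≤ d)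
    (hlen : K - f a ≤ D * (b - a)) :
    ∃ t ∈ Icc a b, K ≤ f t := by
  obtain ⟨t, ht, h⟩ := reach_le (f := fun t => -f t) (K := -K) hab hD hf.neg
    (fun t ht hK => by
      have hK' : f t < K := by have : -K < -f t := hK; linarith
      obtain ⟨d, hdAt, hdge⟩ := hd t ht hK'
      exact ⟨-d, hdAt.neg, by linarith⟩)
    (show -f a - -K ≤ D * (b - a) by linarith)
  have h' : -f t ≤ -K := h
  exact ⟨t, ht, by linarith⟩

/-- Positivity is preserved for solutions of `f' = f * g` with `g` continuous. -/
lemma pos_aux {f g : ℝ → ℝ}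
    (hf : ∀ t ∈ Ici (0:ℝ), HasDerivWithinAt f (f t * g t) (Ici 0) t)
    (hgc : ContinuousOn g (Ici 0)) (h0 : 0 < f 0) :
    ∀ t ∈ Ici (0:ℝ), 0 < f t := by
  have hfc : ContinuousOn f (Ici 0) := fun t ht => (hf t ht).continuousWithinAt
  intro T hT
  by_contra hle
  push_neg at hle
  set S : Set ℝ := {τ | τ ∈ Icc 0 T ∧ f τ ≤ 0} with hS
  have hScl : IsClosed S :=
    (hfc.mono (Icc_subset_Ici_self)).preimage_isClosed_of_isClosed isClosed_Icc isClosed_Iic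
  have hSne : S.Nonempty := ⟨T, ⟨right_mem_Icc.2 hT, hle⟩⟩
  have hSbd : BddBelow S := ⟨0, fun τ hτ => hτ.1.1⟩
  set T' := sInf S with hT'
  have hTS : T' ∈ S := hScl.csInf_mem hSne hSbd
  have hT'pos : 0 < T' := by
    rcases lt_or_eq_of_le hTS.1.1 with h | h
    · exact h
    · exfalso; rw [← h] at hTS; linarith [hTS.2]
  have hfpos : ∀ τ ∈ Ico (0:ℝ) T', 0 < f τ := by
    intro τ hτ
    by_contra hle2
    push_neg at hle2
    have : τ ∈ S := ⟨⟨hτ.1, hτ.2.le.trans hTS.1.2⟩, hle2⟩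
    exact absurd (csInf_le hSbd this) (not_le.2 hτ.2)
  -- bound g on [0, T']
  obtain ⟨L₀, hL₀⟩ := (isCompact_Icc (a := (0:ℝ)) (b := T')).exists_bound_of_continuousOn
    (hgc.mono (Icc_subset_Ici_self))
  set L := max L₀ 0 with hLdef
  have hL : ∀ τ ∈ Icc (0:ℝ) T', -L ≤ g τ := by
    intro τ hτ
    have := hL₀ τ hτ
    rw [Real.norm_eq_abs] at this
    have : |g τ| ≤ L := le_trans this (le_max_left _ _)
    cases' abs_le.1 this with h1 h2
    linarith
  -- monotone auxiliary function
  have hmono : MonotoneOn (fun t => f t * Real.exp (L * t)) (Icc 0 T') := by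
    apply monotoneOn_of_deriv_nonneg (convex_Icc 0 T')
    · exact (hfc.mono Icc_subset_Ici_self).mul
        ((Real.continuous_exp.comp (continuous_const.mul continuous_id)).continuousOn)
    · intro τ hτ
      rw [interior_Icc] at hτ
      have hfd : HasDerivAt f (f τ * g τ) τ :=
        (hf τ (le_of_lt hτ.1)).hasDerivAt (Ici_mem_nhds hτ.1)
      have hed : HasDerivAt (fun t => Real.exp (L * t)) (Real.exp (L * τ) * L) τ := by
        have h := (Real.hasDerivAt_exp (L * τ)).comp τ ((hasDerivAt_id τ).const_mul L)
        simp only [id_eq, mul_one] at h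
        exact h
      exact ((hfd.mul hed).differentiableAt).differentiableWithinAt
    · intro τ hτ
      rw [interior_Icc] at hτ
      have hfd : HasDerivAt f (f τ * g τ) τ :=
        (hf τ (le_of_lt hτ.1)).hasDerivAt (Ici_mem_nhds hτ.1)
      have hed : HasDerivAt (fun t => Real.exp (L * t)) (Real.exp (L * τ) * L) τ := by
        have h := (Real.hasDerivAt_exp (L * τ)).comp τ ((hasDerivAt_id τ).const_mul L)
        simp only [id_eq, mul_one] at h
        exact h
      have hderiv : deriv (fun t => f t * Real.exp (L * t)) τ
          = f τ * g τ * Real.exp (L * τ) + f τ * (Real.exp (L * τ) * L) :=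
        (hfd.mul hed).deriv
      rw [hderiv]
      have h1 : 0 < f τ := hfpos τ ⟨hτ.1.le, hτ.2⟩
      have h2 : -L ≤ g τ := hL τ ⟨hτ.1.le, hτ.2.le⟩
      have h3 : (0:ℝ) < Real.exp (L * τ) := Real.exp_pos _
      nlinarith [mul_pos h1 h3, mul_nonneg (mul_pos h1 h3).le (show (0:ℝ) ≤ g τ + L by linarith)]
  have := hmono (left_mem_Icc.2 hT'pos.le) (right_mem_Icc.2 hT'pos.le) hT'pos.le
  simp only [mul_zero, Real.exp_zero, mul_one] at this
  nlinarith [Real.exp_pos (L * T'), hTS.2, h0]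

section
variable {α β A B x₀ ε : ℝ}

set_option maxHeartbeats 3200000 in
lemma upper_aux (hα : 1 < α) (hβ : 1 < β)
    (hA : A = (α - 1) / (α * β - 1)) (hB : B = (β - 1) / (α * β - 1))
    (hx₀ : 0 < x₀) (hε : 0 < ε) (hεA : ε ≤ A / (2*α)) :
    ∃ δ₀ > 0, ∀ δ : ℝ, 0 < δ → δ < δ₀ → ∀ x y : ℝ → ℝ,
      (∀ t ∈ Set.Ici (0 : ℝ),
        HasDerivWithinAt x (x t * (1 - x t - α * y t)) (Set.Ici 0) t) →
      (∀ t ∈ Set.Ici (0 : ℝ),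
        HasDerivWithinAt y (δ * y t * (1 - y t - β * x t)) (Set.Ici 0) t) →
      x 0 = x₀ → 0 < y 0 → B + ε ≤ y 0 →
      Tendsto y atTop (nhds B) → False := by
  have hα0 : 0 < α := by linarith
  have hβ0 : 0 < β := by linarith
  have hαβ : 1 < α * β := by nlinarith
  have hαβ0 : (0:ℝ) < α * β - 1 := by linarith
  have hA0 : 0 < A := by rw [hA]; exact div_pos (by linarith) hαβ0
  have hB0 : 0 < B := by rw [hB]; exact div_pos (by linarith) hαβ0
  have hαεA : α * ε ≤ A / 2 := by
    have := (le_div_iff₀ (by positivity : (0:ℝ) < 2*α)).1 hεA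
    nlinarith
  -- identities
  have hid1 : 1 - α * B = A := by rw [hA, hB]; field_simp; ring
  have hid2 : 1 - B = β * A := by
    rw [hA, hB, mul_div_assoc', eq_div_iff hαβ0.ne', sub_mul, div_mul_cancel₀ _ hαβ0.ne']; ring
  -- constants (introduced opaquely so that linarith doesn't unfold them)
  obtain ⟨κ, hκdef⟩ : ∃ c : ℝ, c = ε * (α * β - 1) / β := ⟨_, rfl⟩
  have hκ : 0 < κ := by rw [hκdef]; exact div_pos (mul_pos hε hαβ0) hβ0
  have hβκ : β * κ = ε * (α * β - 1) := by rw [hκdef]; field_simp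
  obtain ⟨σ, hσdef⟩ : ∃ c : ℝ, c = (α * β - 1) / (4 * (α * β)) := ⟨_, rfl⟩
  have hαβ40 : (0:ℝ) < 4 * (α * β) := by linarith only [hαβ]
  have hσ0 : 0 < σ := by rw [hσdef]; exact div_pos hαβ0 hαβ40
  have hσ1 : σ < 1 := by
    rw [hσdef, div_lt_one hαβ40]; linarith only [hαβ]
  have hασ : α * ε * σ = κ / 4 := by
    rw [hσdef, hκdef]; field_simp
  obtain ⟨b, hbdef⟩ : ∃ c : ℝ, c = B + ε * (1 - σ) := ⟨_, rfl⟩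
  have hbB : B < b := by
    have h1 := mul_pos hε (by linarith only [hσ1] : (0:ℝ) < 1 - σ)
    rw [hbdef]; linarith only [h1]
  have hbBε : b < B + ε := by
    have h1 : ε * (1 - σ) < ε := by nlinarith [mul_pos hε hσ0]
    rw [hbdef]; linarith only [h1]
  have hb0 : 0 < b := by linarith only [hbB, hB0]
  have hc : 1 - α * b = A - α * ε + κ / 4 := by
    have h1 : 1 - α * b = (1 - α * B) - α * ε + α * ε * σ := by rw [hbdef]; ring
    rw [h1, hid1, hασ]
  obtain ⟨q, hqdef⟩ : ∃ c : ℝ, c = A - α * ε + κ / 2 := ⟨_, rfl⟩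
  have hκαε : κ / 2 < α * ε := by
    have h1 : κ < 2 * (α * ε) := by
      rw [hκdef, div_lt_iff₀ hβ0]; nlinarith
    linarith only [h1]
  have hq0 : 0 < q := by rw [hqdef]; linarith only [hαεA, hκ, hA0]
  have hqA : q < A := by rw [hqdef]; linarith only [hκαε]
  have hA1 : A < 1 := by nlinarith [hid2]
  obtain ⟨X, hXdef⟩ : ∃ c : ℝ, c = max x₀ 1 := ⟨_, rfl⟩
  have hX1 : 1 ≤ X := by rw [hXdef]; exact le_max_right _ _
  have hx₀X : x₀ ≤ X := by rw [hXdef]; exact le_max_left _ _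
  have hqX : q < X := by linarith only [hqA, hA1, hX1]
  obtain ⟨d, hddef⟩ : ∃ c : ℝ, c = q * κ / 4 := ⟨_, rfl⟩
  have hd0 : 0 < d := by
    rw [hddef]; have := mul_pos hq0 hκ; linarith only [this]
  obtain ⟨T₀, hT₀def⟩ : ∃ c : ℝ, c = (X - q) / d + 1 := ⟨_, rfl⟩
  have hT₀ : 0 < T₀ := by
    have h1 : 0 ≤ (X - q)/d := div_nonneg (by linarith only [hqX]) hd0.le
    rw [hT₀def]; linarith only [h1]
  obtain ⟨C, hCdef⟩ : ∃ c : ℝ, c = 1 + β * X / b := ⟨_, rfl⟩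
  have hC0 : 0 < C := by
    have h1 : 0 < β * X / b :=
      div_pos (mul_pos hβ0 (lt_of_lt_of_le one_pos hX1)) hb0
    rw [hCdef]; linarith only [h1]
  have hCT1 : 0 < C * T₀ + 1 := by
    have := mul_pos hC0 hT₀; linarith only [this]
  have hinvlt : 1/(B+ε) < 1/b := one_div_lt_one_div_of_lt hb0 hbBε
  obtain ⟨δ₀, hδ₀def⟩ : ∃ c : ℝ, c = (1/b - 1/(B+ε)) / (C * T₀ + 1) := ⟨_, rfl⟩
  have hδ₀0 : 0 < δ₀ := by
    rw [hδ₀def]; exact div_pos (by linarith only [hinvlt]) hCT1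
  refine ⟨δ₀, hδ₀0, ?_⟩
  intro δ hδ0 hδδ₀ x y hx hy hx0 hy0pos hy0 hlim
  have hxc : ContinuousOn x (Ici 0) := fun t ht => (hx t ht).continuousWithinAt
  have hyc : ContinuousOn y (Ici 0) := fun t ht => (hy t ht).continuousWithinAt
  have hxpos : ∀ t ∈ Ici (0:ℝ), 0 < x t :=
    pos_aux hx ((continuousOn_const.sub hxc).sub (continuousOn_const.mul hyc))
      (by rw [hx0]; exact hx₀)
  have hypos : ∀ t ∈ Ici (0:ℝ), 0 < y t := by
    apply pos_aux (g := fun t => δ * (1 - y t - β * x t))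
    · intro t ht
      have h := hy t ht
      have : δ * y t * (1 - y t - β * x t) = y t * (δ * (1 - y t - β * x t)) := by ring
      rwa [this] at h
    · exact continuousOn_const.mul ((continuousOn_const.sub hyc).sub (continuousOn_const.mul hxc))
    · exact hy0pos
  have hxX : ∀ t ∈ Ici (0:ℝ), x t ≤ X := by
    intro T hT
    refine stay_le (a := 0) (b := T) (K := X) hT (hxc.mono Icc_subset_Ici_self)
      (by rw [hx0]; exact hx₀X) ?_ T (right_mem_Icc.2 hT)
    intro τ hτ hXle
    refine ⟨_, (hx τ hτ.1.le).hasDerivAt (Ici_mem_nhds hτ.1), ?_⟩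
    have h1 : 0 < x τ := hxpos τ hτ.1.le
    have h2 : 0 < y τ := hypos τ hτ.1.le
    have h3 : 1 - x τ - α * y τ < 0 := by
      linarith only [hXle, hX1, mul_pos hα0 h2]
    exact mul_neg_of_pos_of_neg h1 h3
  -- first time y reaches level b
  set SE : Set ℝ := Ici 0 ∩ y ⁻¹' (Iic b) with hSEdef
  have hSEcl : IsClosed SE := hyc.preimage_isClosed_of_isClosed isClosed_Ici isClosed_Iic
  have hSEne : SE.Nonempty := by
    have h1 : ∀ᶠ t in atTop, y t < b := hlim.eventually (gt_mem_nhds hbB)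
    obtain ⟨t, ht1, ht2⟩ := (h1.and (eventually_ge_atTop (0:ℝ))).exists
    exact ⟨t, ht2, le_of_lt ht1⟩
  have hSEbd : BddBelow SE := ⟨0, fun τ hτ => hτ.1⟩
  set E := sInf SE with hEdef
  have hE : E ∈ SE := hSEcl.csInf_mem hSEne hSEbd
  have hE0 : 0 ≤ E := hE.1
  have hEb : y E ≤ b := hE.2
  have hyband : ∀ τ, 0 ≤ τ → τ < E → b < y τ := by
    intro τ h0 hτE
    by_contra hle; push_neg at hle
    exact absurd (csInf_le hSEbd ⟨h0, hle⟩) (not_le.2 hτE)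
  by_cases hcase : T₀ < E
  · -- slow regime: x is pushed below q, then y must increase in the band
    have hdesc : ∀ τ ∈ Ioo (0:ℝ) E, q ≤ x τ →
        x τ * (1 - x τ - α * y τ) ≤ -(x τ * (κ/4)) := by
      intro τ hτ hqx
      have hyb : b < y τ := hyband τ hτ.1.le hτ.2
      have hxp : 0 < x τ := hxpos τ hτ.1.le
      have hfac : 1 - x τ - α * y τ ≤ -(κ/4) := by
        have h1 : α * b ≤ α * y τ := mul_le_mul_of_nonneg_left hyb.le hα0.le
        rw [hqdef] at hqx
        linarith only [h1, hqx, hc]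
      linarith only [mul_le_mul_of_nonneg_left hfac hxp.le]
    obtain ⟨tr, htr, hxtr⟩ := reach_le (a := 0) (b := T₀) (K := q) (D := d) hT₀.le hd0
      (hxc.mono Icc_subset_Ici_self)
      (fun τ hτ hqx => ⟨_, (hx τ hτ.1.le).hasDerivAt (Ici_mem_nhds hτ.1), by
        have h := hdesc τ ⟨hτ.1, hτ.2.trans hcase⟩ hqx.le
        have h2 : q * (κ/4) ≤ x τ * (κ/4) :=
          mul_le_mul_of_nonneg_right hqx.le (by linarith only [hκ])
        rw [hddef]; linarith only [h, h2]⟩)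
      (by
        rw [hx0]
        have he : d * (T₀ - 0) = (X - q) + d := by
          rw [hT₀def]; field_simp; ring
        rw [he]; linarith only [hx₀X, hd0])
    have htrE : tr ≤ E := htr.2.trans hcase.le
    have hxq : ∀ t ∈ Icc tr E, x t ≤ q := by
      apply stay_le htrE (hxc.mono (Icc_subset_Ici_self.trans (Ici_subset_Ici.mpr htr.1))) hxtr
      intro τ hτ hqx
      have hτ0 : 0 < τ := lt_of_le_of_lt htr.1 hτ.1
      refine ⟨_, (hx τ hτ0.le).hasDerivAt (Ici_mem_nhds hτ0), ?_⟩
      have h := hdesc τ ⟨hτ0, hτ.2⟩ hqx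
      have hxp : 0 < x τ := hxpos τ hτ0.le
      linarith only [h, mul_pos hxp (show (0:ℝ) < κ/4 by linarith only [hκ])]
    -- last time y is at level B+ε
    set S1 : Set ℝ := {τ | τ ∈ Icc 0 E ∧ B + ε ≤ y τ} with hS1def
    have hS1cl : IsClosed S1 :=
      (hyc.mono Icc_subset_Ici_self).preimage_isClosed_of_isClosed isClosed_Icc isClosed_Ici
    have hS1ne : S1.Nonempty := ⟨0, left_mem_Icc.2 hE0, hy0⟩
    have hS1bd : BddAbove S1 := ⟨E, fun τ hτ => hτ.1.2⟩
    set t₁ := sSup S1 with ht₁def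
    have ht₁ : t₁ ∈ S1 := hS1cl.csSup_mem hS1ne hS1bd
    have ht₁E : t₁ < E := lt_of_le_of_ne ht₁.1.2 (fun h => by
      have h2 := ht₁.2; rw [h] at h2; linarith only [h2, hEb, hbBε])
    have hlt : ∀ τ, t₁ < τ → τ ≤ E → y τ < B + ε := by
      intro τ hτ1 hτE
      by_contra hge; push_neg at hge
      exact absurd (le_csSup hS1bd ⟨⟨le_trans ht₁.1.1 hτ1.le, hτE⟩, hge⟩) (not_le.2 hτ1)
    set t₂ := max t₁ T₀ with ht₂def
    have ht₂E : t₂ < E := max_lt ht₁E hcase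
    have ht₂0 : 0 ≤ t₂ := le_trans hT₀.le (le_max_right _ _)
    have hβκ0 : 0 < β * κ := mul_pos hβ0 hκ
    have hband : 1 - (B + ε) - β * q = β * κ / 2 := by
      rw [hqdef]; linear_combination hid2 - hβκ
    have hmono2 : StrictMonoOn y (Icc t₂ E) := by
      apply strictMonoOn_of_deriv_pos (convex_Icc _ _) (hyc.mono (Icc_subset_Ici_self.trans (Ici_subset_Ici.mpr ht₂0)))
      intro τ hτ
      rw [interior_Icc] at hτ
      have hτ0 : 0 < τ := lt_of_le_of_lt ht₂0 hτ.1
      have hyd : HasDerivAt y (δ * y τ * (1 - y τ - β * x τ)) τ :=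
        (hy τ hτ0.le).hasDerivAt (Ici_mem_nhds hτ0)
      rw [hyd.deriv]
      have h1 : b < y τ := hyband τ hτ0.le hτ.2
      have h2 : y τ < B + ε := hlt τ (lt_of_le_of_lt (le_max_left _ _) hτ.1) hτ.2.le
      have h3 : x τ ≤ q := hxq τ
        ⟨le_trans (le_trans htr.2 (le_max_right t₁ T₀)) hτ.1.le, hτ.2.le⟩
      have h3' : β * x τ ≤ β * q := mul_le_mul_of_nonneg_left h3 hβ0.le
      have h4 : 0 < 1 - y τ - β * x τ := by
        linarith only [h2, h3', hband, hβκ0]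
      exact mul_pos (mul_pos hδ0 (by linarith only [h1, hb0] : 0 < y τ)) h4
    have hfin := hmono2 (left_mem_Icc.2 ht₂E.le) (right_mem_Icc.2 ht₂E.le) ht₂E
    have hbt₂ : b < y t₂ := hyband t₂ ht₂0 ht₂E
    linarith only [hfin, hbt₂, hEb]
  · -- fast regime: E ≤ T₀, use the reciprocal of y
    push_neg at hcase
    have hzc : ContinuousOn (fun t => (y t)⁻¹) (Icc 0 E) :=
      (hyc.mono Icc_subset_Ici_self).inv₀ (fun t ht => ne_of_gt (hypos t ht.1))
    have hsub : (y E)⁻¹ - (y 0)⁻¹ ≤ δ * C * (E - 0) := by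
      apply sub_le_of_deriv_le' hE0 hzc
      intro τ hτ
      have hyd : HasDerivAt y (δ * y τ * (1 - y τ - β * x τ)) τ :=
        (hy τ hτ.1.le).hasDerivAt (Ici_mem_nhds hτ.1)
      have hyp : 0 < y τ := hypos τ hτ.1.le
      refine ⟨_, hyd.inv (ne_of_gt hyp), ?_⟩
      have h1 : b < y τ := hyband τ hτ.1.le hτ.2
      have h2 : 0 < x τ := hxpos τ hτ.1.le
      have h3 : x τ ≤ X := hxX τ hτ.1.le
      have key : (y τ - 1 + β * x τ) * b ≤ (b + β * X) * y τ := by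
        have p1 : (b * β) * x τ ≤ (b * β) * X :=
          mul_le_mul_of_nonneg_left h3 (mul_pos hb0 hβ0).le
        have p2 : (β * X) * b ≤ (β * X) * y τ :=
          mul_le_mul_of_nonneg_left h1.le
            (mul_nonneg hβ0.le (le_trans zero_le_one hX1))
        linarith only [p1, p2, hb0]
      have hfrac : δ * C = (δ * (b + β * X)) / b := by
        rw [hCdef]; field_simp
      rw [hfrac]
      rw [div_le_div_iff₀ (pow_pos hyp 2) hb0]
      linarith only [mul_le_mul_of_nonneg_left key (mul_nonneg hδ0.le hyp.le)]
    have hz0 : (y 0)⁻¹ ≤ (B + ε)⁻¹ := inv_anti₀ (by linarith only [hB0, hε]) hy0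
    have hzE : b⁻¹ ≤ (y E)⁻¹ := inv_anti₀ (hypos E hE0) hEb
    have hδbound : δ * (C * T₀ + 1) < 1/b - 1/(B+ε) := by
      rw [hδ₀def] at hδδ₀
      exact (lt_div_iff₀ hCT1).1 hδδ₀
    have hEC : δ * C * (E - 0) ≤ δ * C * T₀ :=
      mul_le_mul_of_nonneg_left (by linarith only [hcase]) (mul_pos hδ0 hC0).le
    rw [one_div, one_div] at hδbound
    linarith only [hsub, hz0, hzE, hδbound, hEC, hδ0]

set_option maxHeartbeats 3200000 in
lemma lower_aux (hα : 1 < α) (hβ : 1 < β)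
    (hA : A = (α - 1) / (α * β - 1)) (hB : B = (β - 1) / (α * β - 1))
    (hx₀ : 0 < x₀) (hε : 0 < ε) :
    ∃ δ₀ > 0, ∀ δ : ℝ, 0 < δ → δ < δ₀ → ∀ x y : ℝ → ℝ,
      (∀ t ∈ Set.Ici (0 : ℝ),
        HasDerivWithinAt x (x t * (1 - x t - α * y t)) (Set.Ici 0) t) →
      (∀ t ∈ Set.Ici (0 : ℝ),
        HasDerivWithinAt y (δ * y t * (1 - y t - β * x t)) (Set.Ici 0) t) →
      x 0 = x₀ → 0 < y 0 → y 0 ≤ B - ε →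
      Tendsto y atTop (nhds B) → False := by
  have hα0 : 0 < α := by linarith
  have hβ0 : 0 < β := by linarith
  have hαβ : 1 < α * β := by nlinarith
  have hαβ0 : (0:ℝ) < α * β - 1 := by linarith
  have hA0 : 0 < A := by rw [hA]; exact div_pos (by linarith) hαβ0
  have hB0 : 0 < B := by rw [hB]; exact div_pos (by linarith) hαβ0
  have hid1 : 1 - α * B = A := by rw [hA, hB]; field_simp; ring
  have hid2 : 1 - B = β * A := by
    rw [hA, hB, mul_div_assoc', eq_div_iff hαβ0.ne', sub_mul, div_mul_cancel₀ _ hαβ0.ne']; ring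
  have hB1 : B < 1 := by nlinarith [hid2, hA0]
  -- constants
  obtain ⟨κ, hκdef⟩ : ∃ c : ℝ, c = ε * (α * β - 1) / β := ⟨_, rfl⟩
  have hκ : 0 < κ := by rw [hκdef]; exact div_pos (mul_pos hε hαβ0) hβ0
  have hβκ : β * κ = ε * (α * β - 1) := by rw [hκdef]; field_simp
  obtain ⟨σ, hσdef⟩ : ∃ c : ℝ, c = (α * β - 1) / (4 * (α * β)) := ⟨_, rfl⟩
  have hαβ40 : (0:ℝ) < 4 * (α * β) := by linarith only [hαβ]
  have hσ0 : 0 < σ := by rw [hσdef]; exact div_pos hαβ0 hαβ40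
  have hσ1 : σ < 1 := by
    rw [hσdef, div_lt_one hαβ40]; linarith only [hαβ]
  have hασ : α * ε * σ = κ / 4 := by
    rw [hσdef, hκdef]; field_simp
  obtain ⟨b₂, hb2def⟩ : ∃ c : ℝ, c = B - ε * (1 - σ) := ⟨_, rfl⟩
  have hb2B : b₂ < B := by
    have h1 := mul_pos hε (by linarith only [hσ1] : (0:ℝ) < 1 - σ)
    rw [hb2def]; linarith only [h1]
  have hb2Bε : B - ε < b₂ := by
    have h1 : ε * (1 - σ) < ε := by nlinarith [mul_pos hε hσ0]
    rw [hb2def]; linarith only [h1]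
  have hb21 : b₂ < 1 := by linarith only [hb2B, hB1]
  have hεσ : b₂ - (B - ε) = ε * σ := by rw [hb2def]; ring
  have hεσ0 : 0 < ε * σ := mul_pos hε hσ0
  have hc₂ : 1 - α * b₂ = A + α * ε - κ / 4 := by
    have h1 : 1 - α * b₂ = (1 - α * B) + α * ε - α * ε * σ := by rw [hb2def]; ring
    rw [h1, hid1, hασ]
  obtain ⟨q₂, hq2def⟩ : ∃ c : ℝ, c = A + α * ε - κ / 2 := ⟨_, rfl⟩
  have hκαε : κ / 2 < α * ε := by
    have h1 : κ < 2 * (α * ε) := by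
      rw [hκdef, div_lt_iff₀ hβ0]; nlinarith
    linarith only [h1]
  have hq20 : 0 < q₂ := by rw [hq2def]; linarith only [hκαε, hA0]
  obtain ⟨m, hmdef⟩ : ∃ c : ℝ, c = min x₀ q₂ := ⟨_, rfl⟩
  have hm0 : 0 < m := by rw [hmdef]; exact lt_min hx₀ hq20
  have hmq2 : m ≤ q₂ := by rw [hmdef]; exact min_le_right _ _
  have hmx₀ : m ≤ x₀ := by rw [hmdef]; exact min_le_left _ _
  obtain ⟨d₂, hd2def⟩ : ∃ c : ℝ, c = m * κ / 4 := ⟨_, rfl⟩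
  have hd20 : 0 < d₂ := by
    rw [hd2def]; have := mul_pos hm0 hκ; linarith only [this]
  obtain ⟨T₀, hT₀def⟩ : ∃ c : ℝ, c = (q₂ - m) / d₂ + 1 := ⟨_, rfl⟩
  have hT₀ : 0 < T₀ := by
    have h1 : 0 ≤ (q₂ - m)/d₂ := div_nonneg (by linarith only [hmq2]) hd20.le
    rw [hT₀def]; linarith only [h1]
  obtain ⟨δ₀, hδ₀def⟩ : ∃ c : ℝ, c = ε * σ / (T₀ + 1) := ⟨_, rfl⟩
  have hδ₀0 : 0 < δ₀ := by
    rw [hδ₀def]; exact div_pos hεσ0 (by linarith only [hT₀])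
  refine ⟨δ₀, hδ₀0, ?_⟩
  intro δ hδ0 hδδ₀ x y hx hy hx0 hy0pos hy0 hlim
  have hxc : ContinuousOn x (Ici 0) := fun t ht => (hx t ht).continuousWithinAt
  have hyc : ContinuousOn y (Ici 0) := fun t ht => (hy t ht).continuousWithinAt
  have hxpos : ∀ t ∈ Ici (0:ℝ), 0 < x t :=
    pos_aux hx ((continuousOn_const.sub hxc).sub (continuousOn_const.mul hyc))
      (by rw [hx0]; exact hx₀)
  have hypos : ∀ t ∈ Ici (0:ℝ), 0 < y t := by
    apply pos_aux (g := fun t => δ * (1 - y t - β * x t))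
    · intro t ht
      have h := hy t ht
      have he : δ * y t * (1 - y t - β * x t) = y t * (δ * (1 - y t - β * x t)) := by ring
      rwa [he] at h
    · exact continuousOn_const.mul ((continuousOn_const.sub hyc).sub (continuousOn_const.mul hxc))
    · exact hy0pos
  -- first time y reaches level b₂ (from below)
  set SE : Set ℝ := Ici 0 ∩ y ⁻¹' (Ici b₂) with hSEdef
  have hSEcl : IsClosed SE := hyc.preimage_isClosed_of_isClosed isClosed_Ici isClosed_Ici
  have hSEne : SE.Nonempty := by
    have h1 : ∀ᶠ t in atTop, b₂ < y t := hlim.eventually (lt_mem_nhds hb2B)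
    obtain ⟨t, ht1, ht2⟩ := (h1.and (eventually_ge_atTop (0:ℝ))).exists
    exact ⟨t, ht2, le_of_lt ht1⟩
  have hSEbd : BddBelow SE := ⟨0, fun τ hτ => hτ.1⟩
  set E := sInf SE with hEdef
  have hE : E ∈ SE := hSEcl.csInf_mem hSEne hSEbd
  have hE0 : 0 ≤ E := hE.1
  have hEb : b₂ ≤ y E := hE.2
  have hyband : ∀ τ, 0 ≤ τ → τ < E → y τ < b₂ := by
    intro τ h0 hτE
    by_contra hle; push_neg at hle
    exact absurd (csInf_le hSEbd ⟨h0, hle⟩) (not_le.2 hτE)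
  -- while y < b₂ the x-derivative pushes x up towards q₂
  have hclimb : ∀ τ ∈ Ioo (0:ℝ) E, x τ ≤ q₂ →
      x τ * (κ/4) ≤ x τ * (1 - x τ - α * y τ) := by
    intro τ hτ hqx
    have hyb : y τ < b₂ := hyband τ hτ.1.le hτ.2
    have hxp : 0 < x τ := hxpos τ hτ.1.le
    have hfac : κ/4 ≤ 1 - x τ - α * y τ := by
      have h1 : α * y τ ≤ α * b₂ := mul_le_mul_of_nonneg_left hyb.le hα0.le
      rw [hq2def] at hqx
      linarith only [h1, hqx, hc₂]
    exact mul_le_mul_of_nonneg_left hfac hxp.le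
  have hxm : ∀ t ∈ Icc 0 E, m ≤ x t := by
    apply stay_ge hE0 (hxc.mono Icc_subset_Ici_self) (by rw [hx0]; exact hmx₀)
    intro τ hτ hxle
    refine ⟨_, (hx τ hτ.1.le).hasDerivAt (Ici_mem_nhds hτ.1), ?_⟩
    have hxp : 0 < x τ := hxpos τ hτ.1.le
    have h := hclimb τ hτ (le_trans hxle hmq2)
    have h2 : 0 < x τ * (κ/4) := mul_pos hxp (by linarith only [hκ])
    linarith only [h, h2]
  by_cases hcase : T₀ < E
  · -- slow regime: x is pushed above q₂, then y must decrease in the band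
    obtain ⟨tr, htr, hxtr⟩ := reach_ge (a := 0) (b := T₀) (K := q₂) (D := d₂) hT₀.le hd20
      (hxc.mono Icc_subset_Ici_self)
      (fun τ hτ hqx => ⟨_, (hx τ hτ.1.le).hasDerivAt (Ici_mem_nhds hτ.1), by
        have hτE : τ ∈ Ioo (0:ℝ) E := ⟨hτ.1, hτ.2.trans hcase⟩
        have h := hclimb τ hτE hqx.le
        have hm' : m ≤ x τ := hxm τ ⟨hτ.1.le, (hτ.2.trans hcase).le⟩
        have h2 : m * (κ/4) ≤ x τ * (κ/4) :=
          mul_le_mul_of_nonneg_right hm' (by linarith only [hκ])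
        rw [hd2def]; linarith only [h, h2]⟩)
      (by
        rw [hx0]
        have he : d₂ * (T₀ - 0) = (q₂ - m) + d₂ := by
          rw [hT₀def]; field_simp; ring
        rw [he]; linarith only [hmx₀, hd20])
    have htrE : tr ≤ E := htr.2.trans hcase.le
    have hxq : ∀ t ∈ Icc tr E, q₂ ≤ x t := by
      apply stay_ge htrE (hxc.mono (Icc_subset_Ici_self.trans (Ici_subset_Ici.mpr htr.1))) hxtr
      intro τ hτ hqx
      have hτ0 : 0 < τ := lt_of_le_of_lt htr.1 hτ.1
      refine ⟨_, (hx τ hτ0.le).hasDerivAt (Ici_mem_nhds hτ0), ?_⟩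
      have h := hclimb τ ⟨hτ0, hτ.2⟩ hqx
      have hm' : m ≤ x τ := hxm τ ⟨hτ0.le, hτ.2.le⟩
      have h2 : m * (κ/4) ≤ x τ * (κ/4) :=
        mul_le_mul_of_nonneg_right hm' (by linarith only [hκ])
      linarith only [h, h2, mul_pos hm0 (show (0:ℝ) < κ/4 by linarith only [hκ])]
    -- last time y is at level B-ε
    set S1 : Set ℝ := {τ | τ ∈ Icc 0 E ∧ y τ ≤ B - ε} with hS1def
    have hS1cl : IsClosed S1 :=
      (hyc.mono Icc_subset_Ici_self).preimage_isClosed_of_isClosed isClosed_Icc isClosed_Iic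
    have hS1ne : S1.Nonempty := ⟨0, left_mem_Icc.2 hE0, hy0⟩
    have hS1bd : BddAbove S1 := ⟨E, fun τ hτ => hτ.1.2⟩
    set t₁ := sSup S1 with ht₁def
    have ht₁ : t₁ ∈ S1 := hS1cl.csSup_mem hS1ne hS1bd
    have ht₁E : t₁ < E := lt_of_le_of_ne ht₁.1.2 (fun h => by
      have h2 := ht₁.2; rw [h] at h2; linarith only [h2, hEb, hb2Bε])
    have hgt : ∀ τ, t₁ < τ → τ ≤ E → B - ε < y τ := by
      intro τ hτ1 hτE
      by_contra hge; push_neg at hge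
      exact absurd (le_csSup hS1bd ⟨⟨le_trans ht₁.1.1 hτ1.le, hτE⟩, hge⟩) (not_le.2 hτ1)
    set t₂ := max t₁ T₀ with ht₂def
    have ht₂E : t₂ < E := max_lt ht₁E hcase
    have ht₂0 : 0 ≤ t₂ := le_trans hT₀.le (le_max_right _ _)
    have hβκ0 : 0 < β * κ := mul_pos hβ0 hκ
    have hband : 1 - (B - ε) - β * q₂ = -(β * κ) / 2 := by
      rw [hq2def]; linear_combination hid2 + hβκ
    have hanti2 : StrictAntiOn y (Icc t₂ E) := by
      apply strictAntiOn_of_deriv_neg (convex_Icc _ _)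
        (hyc.mono (Icc_subset_Ici_self.trans (Ici_subset_Ici.mpr ht₂0)))
      intro τ hτ
      rw [interior_Icc] at hτ
      have hτ0 : 0 < τ := lt_of_le_of_lt ht₂0 hτ.1
      have hyd : HasDerivAt y (δ * y τ * (1 - y τ - β * x τ)) τ :=
        (hy τ hτ0.le).hasDerivAt (Ici_mem_nhds hτ0)
      rw [hyd.deriv]
      have h1 : y τ < b₂ := hyband τ hτ0.le hτ.2
      have h2 : B - ε < y τ := hgt τ (lt_of_le_of_lt (le_max_left _ _) hτ.1) hτ.2.le
      have h3 : q₂ ≤ x τ := hxq τ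
        ⟨le_trans (le_trans htr.2 (le_max_right t₁ T₀)) hτ.1.le, hτ.2.le⟩
      have h3' : β * q₂ ≤ β * x τ := mul_le_mul_of_nonneg_left h3 hβ0.le
      have h4 : 1 - y τ - β * x τ < 0 := by
        linarith only [h2, h3', hband, hβκ0]
      exact mul_neg_of_pos_of_neg (mul_pos hδ0 (hypos τ hτ0.le)) h4
    have hfin := hanti2 (left_mem_Icc.2 ht₂E.le) (right_mem_Icc.2 ht₂E.le) ht₂E
    have hbt₂ : y t₂ < b₂ := hyband t₂ ht₂0 ht₂E
    linarith only [hfin, hbt₂, hEb]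
  · -- fast regime: E ≤ T₀, y moves too slowly to climb
    push_neg at hcase
    have hsub : y E - y 0 ≤ δ * (E - 0) := by
      apply sub_le_of_deriv_le' hE0 (hyc.mono Icc_subset_Ici_self)
      intro τ hτ
      have hyd : HasDerivAt y (δ * y τ * (1 - y τ - β * x τ)) τ :=
        (hy τ hτ.1.le).hasDerivAt (Ici_mem_nhds hτ.1)
      refine ⟨_, hyd, ?_⟩
      have hyp : 0 < y τ := hypos τ hτ.1.le
      have hyb : y τ < b₂ := hyband τ hτ.1.le hτ.2
      have hxp : 0 < x τ := hxpos τ hτ.1.le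
      have hg1 : 1 - y τ - β * x τ ≤ 1 := by
        linarith only [hyp, mul_pos hβ0 hxp]
      have hyg : y τ * (1 - y τ - β * x τ) ≤ 1 := by
        have h1 : y τ * (1 - y τ - β * x τ) ≤ y τ * 1 :=
          mul_le_mul_of_nonneg_left hg1 hyp.le
        linarith only [h1, hyb, hb21]
      have h2 : δ * (y τ * (1 - y τ - β * x τ)) ≤ δ * 1 :=
        mul_le_mul_of_nonneg_left hyg hδ0.le
      linarith only [h2]
    have h3 : δ * (E - 0) ≤ δ * T₀ :=
      mul_le_mul_of_nonneg_left (by linarith only [hcase]) hδ0.le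
    have hδb : δ * (T₀ + 1) < ε * σ := by
      rw [hδ₀def] at hδδ₀
      exact (lt_div_iff₀ (by linarith only [hT₀])).1 hδδ₀
    linarith only [hsub, h3, hδb, hεσ, hεσ0, hEb, hy0, hδ0]

end

/-- Limit of the separatrix as `δ → 0⁺`: if for each `δ > 0` the point
`(x₀, s δ)` lies on the stable manifold of the saddle `(A,B)` for the system
with parameter `δ`, then `s δ → B` as `δ → 0⁺`. -/
theorem stmt_18 (α β : ℝ) (hα : 1 < α) (hβ : 1 < β)
    (A B : ℝ) (hA : A = (α - 1) / (α * β - 1)) (hB : B = (β - 1) / (α * β - 1))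
    (x₀ : ℝ) (hx₀ : 0 < x₀) (s : ℝ → ℝ)
    (hs : ∀ δ : ℝ, 0 < δ → 0 < s δ ∧
      ∃ x y : ℝ → ℝ,
        (∀ t ∈ Set.Ici (0 : ℝ),
          HasDerivWithinAt x (x t * (1 - x t - α * y t)) (Set.Ici 0) t) ∧
        (∀ t ∈ Set.Ici (0 : ℝ),
          HasDerivWithinAt y (δ * y t * (1 - y t - β * x t)) (Set.Ici 0) t) ∧
        x 0 = x₀ ∧ y 0 = s δ ∧
        Tendsto (fun t => (x t, y t)) atTop (nhds (A, B))) :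
    Tendsto s (nhdsWithin 0 (Set.Ioi 0)) (nhds B) := by
  have hαβ0 : (0:ℝ) < α * β - 1 := by nlinarith
  have hA0 : 0 < A := by rw [hA]; exact div_pos (by linarith) hαβ0
  rw [Metric.tendsto_nhdsWithin_nhds]
  intro ε hε
  set ε' : ℝ := min (ε/2) (A/(2*α)) with hε'def
  have hε'0 : 0 < ε' := lt_min (by linarith) (div_pos hA0 (by linarith))
  have hε'A : ε' ≤ A/(2*α) := min_le_right _ _
  have hε'ε : ε' ≤ ε/2 := min_le_left _ _
  obtain ⟨δU, hδU0, hU⟩ := upper_aux hα hβ hA hB hx₀ hε'0 hε'A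
  obtain ⟨δL, hδL0, hL⟩ := lower_aux hα hβ hA hB hx₀ hε'0
  refine ⟨min δU δL, lt_min hδU0 hδL0, ?_⟩
  intro δ hδmem hdist
  have hδ0 : 0 < δ := hδmem
  have hδlt : δ < min δU δL := by
    rwa [Real.dist_eq, sub_zero, abs_of_pos hδ0] at hdist
  obtain ⟨hspos, x, y, hx, hy, hx0, hy0, hlim⟩ := hs δ hδ0
  have hylim : Tendsto y atTop (nhds B) := (continuous_snd.tendsto _).comp hlim
  have hy0pos : 0 < y 0 := by rw [hy0]; exact hspos
  have hup : y 0 < B + ε' := by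
    by_contra h; push_neg at h
    exact hU δ hδ0 (lt_of_lt_of_le hδlt (min_le_left _ _)) x y hx hy hx0 hy0pos h hylim
  have hlo : B - ε' < y 0 := by
    by_contra h; push_neg at h
    exact hL δ hδ0 (lt_of_lt_of_le hδlt (min_le_right _ _)) x y hx hy hx0 hy0pos h hylim
  rw [hy0] at hup hlo
  rw [Real.dist_eq, abs_lt]
  constructor <;> linarith
end

section
/- Fix α>1, β>1 and set A=(α−1)/(αβ−1), B=(β−1)/(αβ−1). For δ>0 and x₀>0 let s(x₀,δ)>0 denote the unique value such that the solution of the system dx/dt = x(1−x−αy), dy/dt = δy(1−y−βx) on [0,∞) with initial condition (x₀,s(x₀,δ)) converges to (A,B) as t→∞. Then for every fixed x₀ with 0<x₀<A, s(x₀,δ) → 0 as δ→∞, and for every fixed x₀>A, s(x₀,δ) → ∞ as δ→∞; that is, as 1/δ→0 the separatrix converges to the vertical line x=A. -/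
open Filter

section SepAux
open Set
open Filter Set

/-- monotone comparison: nonneg derivative implies `f a ≤ f b`. -/
lemma my_deriv_le {f F : ℝ → ℝ} {a b : ℝ} (hab : a ≤ b)
    (hf : ∀ t ∈ Set.Icc a b, HasDerivWithinAt f (F t) (Set.Icc a b) t)
    (hF : ∀ t ∈ Set.Ioo a b, 0 ≤ F t) : f a ≤ f b := by
  have cont : ContinuousOn f (Set.Icc a b) := fun t ht => (hf t ht).continuousWithinAt
  have hd : ∀ t ∈ Set.Ioo a b, HasDerivAt f (F t) t := fun t ht =>
    (hf t (Set.Ioo_subset_Icc_self ht)).hasDerivAt (Icc_mem_nhds ht.1 ht.2)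
  have hmono := monotoneOn_of_deriv_nonneg (convex_Icc a b) cont
    (by
      rw [interior_Icc]
      exact fun t ht => (hd t ht).differentiableAt.differentiableWithinAt)
    (by
      rw [interior_Icc]
      intro t ht
      rw [(hd t ht).deriv]
      exact hF t ht)
  exact hmono (Set.left_mem_Icc.2 hab) (Set.right_mem_Icc.2 hab) hab

lemma exp_comp_ge {f F : ℝ → ℝ} {k a b : ℝ} (hab : a ≤ b)
    (hf : ∀ t ∈ Set.Icc a b, HasDerivWithinAt f (F t) (Set.Icc a b) t)
    (h : ∀ t ∈ Set.Ioo a b, k * f t ≤ F t) :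
    f a * Real.exp (-(k * a)) ≤ f b * Real.exp (-(k * b)) := by
  have : ∀ t ∈ Set.Icc a b, HasDerivWithinAt (fun u => f u * Real.exp (-(k * u)))
      ((F t - k * f t) * Real.exp (-(k * t))) (Set.Icc a b) t := by
    intro t ht
    have h2 : HasDerivAt (fun u : ℝ => Real.exp (-(k * u))) (Real.exp (-(k * t)) * (-k)) t := by
      have h1 : HasDerivAt (fun u : ℝ => -(k * u)) (-k) t := by
        exact ((hasDerivAt_id t).const_mul k).neg.congr_deriv (by ring)
      exact h1.exp
    have := (hf t ht).mul h2.hasDerivWithinAt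
    exact this.congr_deriv (by ring)
  have := my_deriv_le hab this (fun t ht => by
    have h1 := h t ht
    have : 0 ≤ F t - k * f t := by linarith
    exact mul_nonneg this (Real.exp_pos _).le)
  exact this

lemma exp_comp_le {f F : ℝ → ℝ} {k a b : ℝ} (hab : a ≤ b)
    (hf : ∀ t ∈ Set.Icc a b, HasDerivWithinAt f (F t) (Set.Icc a b) t)
    (h : ∀ t ∈ Set.Ioo a b, F t ≤ k * f t) :
    f b * Real.exp (-(k * b)) ≤ f a * Real.exp (-(k * a)) := by
  have := exp_comp_ge (f := fun t => -f t) (F := fun t => -F t) (k := k) hab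
    (fun t ht => (hf t ht).neg)
    (fun t ht => by have := h t ht; beta_reduce; linarith [h t ht])
  simp only [neg_mul] at this
  linarith

/-- `f T ≥ f 0 * exp (k T)` comparison. -/
lemma comp_ge {f F : ℝ → ℝ} {k T : ℝ} (hT : 0 ≤ T)
    (hf : ∀ t ∈ Set.Icc 0 T, HasDerivWithinAt f (F t) (Set.Icc 0 T) t)
    (h : ∀ t ∈ Set.Ioo 0 T, k * f t ≤ F t) :
    f 0 * Real.exp (k * T) ≤ f T := by
  have h1 := exp_comp_ge hT hf h
  rw [mul_zero, neg_zero, Real.exp_zero, mul_one] at h1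
  have h2 := mul_le_mul_of_nonneg_right h1 (Real.exp_pos (k * T)).le
  rw [mul_assoc, ← Real.exp_add, neg_add_cancel, Real.exp_zero, mul_one] at h2
  exact h2

lemma comp_le {f F : ℝ → ℝ} {k T : ℝ} (hT : 0 ≤ T)
    (hf : ∀ t ∈ Set.Icc 0 T, HasDerivWithinAt f (F t) (Set.Icc 0 T) t)
    (h : ∀ t ∈ Set.Ioo 0 T, F t ≤ k * f t) :
    f T ≤ f 0 * Real.exp (k * T) := by
  have h1 := exp_comp_le hT hf h
  rw [mul_zero, neg_zero, Real.exp_zero, mul_one] at h1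
  have h2 := mul_le_mul_of_nonneg_right h1 (Real.exp_pos (k * T)).le
  rw [mul_assoc, ← Real.exp_add, neg_add_cancel, Real.exp_zero, mul_one] at h2
  exact h2

lemma freq_bad {S : Set ℝ} (hne : S.Nonempty) (hbdd : BddBelow S) (hT : sInf S ∉ S) :
    ∃ᶠ u in nhdsWithin (sInf S) (Set.Ioi (sInf S)), u ∈ S := by
  rw [(nhdsGT_basis _).frequently_iff]
  intro b hb
  obtain ⟨u, hu, hub⟩ : ∃ u ∈ S, u < b := by
    by_contra h
    push_neg at h
    exact absurd (le_csInf hne h) (not_le.2 hb)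
  refine ⟨u, ⟨(csInf_le hbdd hu).lt_of_ne (fun e => hT (by rw [e]; exact hu)), hub⟩, hu⟩


lemma invariant {x y F G : ℝ → ℝ} {c m t₁ : ℝ} (ht₁ : 0 ≤ t₁)
    (hx : ∀ t ∈ Set.Ici (0 : ℝ), HasDerivWithinAt x (F t) (Set.Ici 0) t)
    (hy : ∀ t ∈ Set.Ici (0 : ℝ), HasDerivWithinAt y (G t) (Set.Ici 0) t)
    (hF : ∀ t, t₁ ≤ t → x t = c → m ≤ y t → F t < 0)
    (hG : ∀ t, t₁ ≤ t → y t = m → x t ≤ c → 0 < G t)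
    (hx₁ : x t₁ ≤ c) (hy₁ : m ≤ y t₁) :
    ∀ t, t₁ ≤ t → x t ≤ c ∧ m ≤ y t := by
  by_contra hcon
  push_neg at hcon
  set Bad : Set ℝ := {t | t₁ ≤ t ∧ ¬(x t ≤ c ∧ m ≤ y t)} with hBad
  have hne : Bad.Nonempty := by
    obtain ⟨t, ht, h⟩ := hcon
    refine ⟨t, ht, ?_⟩
    intro ⟨h1, h2⟩
    exact absurd (h h1) (not_lt.2 h2)
  have hbdd : BddBelow Bad := ⟨t₁, fun u hu => hu.1⟩
  set T := sInf Bad with hTdef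
  have hT1 : t₁ ≤ T := le_csInf hne fun u hu => hu.1
  have hT0 : (0 : ℝ) ≤ T := ht₁.trans hT1
  have good_before : ∀ u, t₁ ≤ u → u < T → x u ≤ c ∧ m ≤ y u := by
    intro u hu1 huT
    by_contra h
    exact absurd (csInf_le hbdd ⟨hu1, h⟩) (not_le.2 huT)
  have hxc : ContinuousWithinAt x (Set.Ici 0) T := (hx T hT0).continuousWithinAt
  have hyc : ContinuousWithinAt y (Set.Ici 0) T := (hy T hT0).continuousWithinAt
  have hsub : Set.Ico t₁ T ⊆ Set.Ici (0 : ℝ) := fun u hu => ht₁.trans hu.1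
  have goodT : x T ≤ c ∧ m ≤ y T := by
    rcases eq_or_lt_of_le hT1 with h | h
    · rw [← h]; exact ⟨hx₁, hy₁⟩
    · have hne' : (nhdsWithin T (Set.Ico t₁ T)).NeBot := by
        rw [nhdsWithin_Ico_eq_nhdsLT h]
        infer_instance
      constructor
      · refine le_of_tendsto (hxc.mono_left (nhdsWithin_mono T hsub)) ?_
        filter_upwards [self_mem_nhdsWithin] with u hu
        exact (good_before u hu.1 hu.2).1
      · refine ge_of_tendsto (hyc.mono_left (nhdsWithin_mono T hsub)) ?_
        filter_upwards [self_mem_nhdsWithin] with u hu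
        exact (good_before u hu.1 hu.2).2
  have hTnotbad : T ∉ Bad := fun h => h.2 goodT
  have hfreq := freq_bad hne hbdd hTnotbad
  have hle : nhdsWithin T (Set.Ioi T) ≤ nhdsWithin T (Set.Ici 0) :=
    nhdsWithin_mono T (fun u hu => hT0.trans (le_of_lt hu))
  have hle' : nhdsWithin T (Set.Ioi T) ≤ nhdsWithin T (Set.Ici 0 \ {T}) :=
    nhdsWithin_mono T (fun u hu => ⟨hT0.trans (le_of_lt hu), ne_of_gt hu⟩)
  have hevx : ∀ᶠ u in nhdsWithin T (Set.Ioi T), x u ≤ c := by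
    rcases lt_or_eq_of_le goodT.1 with h | h
    · filter_upwards [hle (hxc (Iio_mem_nhds h))] with u hu
      exact le_of_lt hu
    · have hFneg : F T < 0 := hF T hT1 h goodT.2
      have hslope : Tendsto (slope x T) (nhdsWithin T (Set.Ici 0 \ {T})) (nhds (F T)) :=
        hasDerivWithinAt_iff_tendsto_slope.1 (hx T hT0)
      have h1 : ∀ᶠ u in nhdsWithin T (Set.Ici 0 \ {T}), slope x T u < 0 :=
        hslope (Iio_mem_nhds hFneg)
      filter_upwards [hle' h1, self_mem_nhdsWithin] with u hu huT
      rw [slope_def_field] at hu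
      have h2 : (0:ℝ) < u - T := sub_pos.2 huT
      rcases div_neg_iff.1 hu with ⟨h3, h4⟩ | ⟨h3, h4⟩
      · linarith
      · rw [← h]; linarith
  have hevy : ∀ᶠ u in nhdsWithin T (Set.Ioi T), m ≤ y u := by
    rcases lt_or_eq_of_le goodT.2 with h | h
    · filter_upwards [hle (hyc (Ioi_mem_nhds h))] with u hu
      exact le_of_lt hu
    · have hGpos : 0 < G T := hG T hT1 h.symm goodT.1
      have hslope : Tendsto (slope y T) (nhdsWithin T (Set.Ici 0 \ {T})) (nhds (G T)) :=
        hasDerivWithinAt_iff_tendsto_slope.1 (hy T hT0)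
      have h1 : ∀ᶠ u in nhdsWithin T (Set.Ici 0 \ {T}), 0 < slope y T u :=
        hslope (Ioi_mem_nhds hGpos)
      filter_upwards [hle' h1, self_mem_nhdsWithin] with u hu huT
      rw [slope_def_field] at hu
      have h2 : (0:ℝ) < u - T := sub_pos.2 huT
      rcases div_pos_iff.1 hu with ⟨h3, h4⟩ | ⟨h3, h4⟩
      · rw [h]; linarith
      · linarith
  have hevgood : ∀ᶠ u in nhdsWithin T (Set.Ioi T), u ∉ Bad := by
    filter_upwards [hevx, hevy] with u h1 h2
    exact fun hb => hb.2 ⟨h1, h2⟩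
  obtain ⟨u, hu1, hu2⟩ := (hfreq.and_eventually hevgood).exists
  exact hu2 hu1


lemma case1_entry (α β δ c m ε : ℝ) (x y : ℝ → ℝ)
    (hα : 0 < α) (hβ : 0 < β) (hδ : 0 < δ) (hc : 0 < c)
    (hx0pos : 0 < x 0) (hx0c : x 0 < c)
    (hε : 0 < ε) (hεm : ε < m)
    (hγ : 0 < 1 - m - β * c)
    (hδbig : x 0 * Real.exp (Real.log (m / ε) / (δ * (1 - m - β * c))) < c)
    (hx : ∀ t ∈ Set.Ici (0 : ℝ),
      HasDerivWithinAt x (x t * (1 - x t - α * y t)) (Set.Ici 0) t)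
    (hy : ∀ t ∈ Set.Ici (0 : ℝ),
      HasDerivWithinAt y (δ * y t * (1 - y t - β * x t)) (Set.Ici 0) t)
    (hy0ε : ε ≤ y 0) (hy0m : y 0 < m) :
    ∃ T, 0 ≤ T ∧ x T ≤ c ∧ m ≤ y T := by
  have hm : 0 < m := hε.trans hεm
  set γ := 1 - m - β * c with hγdef
  set Tb := Real.log (m / ε) / (δ * γ) with hTbdef
  have hlog : 0 < Real.log (m / ε) := Real.log_pos (by rw [lt_div_iff₀ hε]; linarith)
  have hδγ : 0 < δ * γ := mul_pos hδ hγ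
  have hTb : 0 < Tb := div_pos hlog hδγ
  have hexpTb : Real.exp (δ * γ * Tb) = m / ε := by
    rw [hTbdef, mul_div_cancel₀ _ (ne_of_gt hδγ)]
    exact Real.exp_log (div_pos hm hε)
  set P : ℝ → Prop := fun t => 0 < x t ∧ x t < c ∧ 0 < y t ∧ y t < m with hPdef
  -- derivative restrictions
  have hxI : ∀ T', 0 ≤ T' → ∀ t ∈ Set.Icc 0 T',
      HasDerivWithinAt x (x t * (1 - x t - α * y t)) (Set.Icc 0 T') t :=
    fun T' _ t ht => (hx t ht.1).mono Set.Icc_subset_Ici_self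
  have hyI : ∀ T', 0 ≤ T' → ∀ t ∈ Set.Icc 0 T',
      HasDerivWithinAt y (δ * y t * (1 - y t - β * x t)) (Set.Icc 0 T') t :=
    fun T' _ t ht => (hy t ht.1).mono Set.Icc_subset_Ici_self
  -- comparison bounds valid whenever P holds on (0,T')
  have bx_up : ∀ T', 0 ≤ T' → (∀ u ∈ Set.Ioo (0:ℝ) T', P u) →
      x T' ≤ x 0 * Real.exp (1 * T') := by
    intro T' hT' hP
    refine comp_le hT' (hxI T' hT') ?_
    intro t ht
    obtain ⟨p1, p2, p3, p4⟩ := hP t ht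
    nlinarith [mul_pos p1 p3, mul_pos hα (mul_pos p1 p3), sq_nonneg (x t)]
  have bx_lo : ∀ T', 0 ≤ T' → (∀ u ∈ Set.Ioo (0:ℝ) T', P u) →
      x 0 * Real.exp (-(c + α * m) * T') ≤ x T' := by
    intro T' hT' hP
    refine comp_ge hT' (hxI T' hT') ?_
    intro t ht
    obtain ⟨p1, p2, p3, p4⟩ := hP t ht
    nlinarith [mul_pos p1 (sub_pos.2 p2), mul_pos hα (mul_pos p1 (sub_pos.2 p4))]
  have by_lo : ∀ T', 0 ≤ T' → (∀ u ∈ Set.Ioo (0:ℝ) T', P u) →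
      y 0 * Real.exp (δ * γ * T') ≤ y T' := by
    intro T' hT' hP
    refine comp_ge hT' (hyI T' hT') ?_
    intro t ht
    obtain ⟨p1, p2, p3, p4⟩ := hP t ht
    have h5 : γ ≤ 1 - y t - β * x t := by rw [hγdef]; nlinarith [mul_pos hβ (sub_pos.2 p2)]
    nlinarith [mul_nonneg (mul_pos hδ p3).le (sub_nonneg.2 h5)]
  -- Bad set
  set Bad : Set ℝ := {t | t ∈ Set.Icc 0 Tb ∧ ¬ P t} with hBaddef
  have hP0 : P 0 := ⟨hx0pos, hx0c, hε.trans_le hy0ε, hy0m⟩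
  have hne : Bad.Nonempty := by
    by_contra hemp

    rw [Set.not_nonempty_iff_eq_empty] at hemp
    have hPall : ∀ u ∈ Set.Icc (0:ℝ) Tb, P u := by
      intro u hu
      by_contra h
      have : u ∈ Bad := ⟨hu, h⟩
      rw [hemp] at this
      exact this
    have h1 := by_lo Tb hTb.le (fun u hu => hPall u (Set.Ioo_subset_Icc_self hu))
    rw [hexpTb] at h1
    have h2 : ε * (m / ε) ≤ y 0 * (m / ε) :=
      mul_le_mul_of_nonneg_right hy0ε (div_pos hm hε).le
    rw [mul_div_cancel₀ _ (ne_of_gt hε)] at h2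
    have h4 := (hPall Tb (Set.right_mem_Icc.2 hTb.le)).2.2.2
    linarith
  have hbdd : BddBelow Bad := ⟨0, fun u hu => hu.1.1⟩
  set T := sInf Bad with hTdef
  have hT0 : 0 ≤ T := le_csInf hne fun u hu => hu.1.1
  have hTTb : T ≤ Tb := by
    obtain ⟨b, hb⟩ := hne
    exact (csInf_le hbdd hb).trans hb.1.2
  have good_before : ∀ u ∈ Set.Ioo (0:ℝ) T, P u := by
    intro u hu
    by_contra h
    have : T ≤ u := csInf_le hbdd ⟨⟨hu.1.le, hu.2.le.trans hTTb⟩, h⟩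
    exact absurd this (not_le.2 hu.2)
  -- bounds at T
  have hxTc : x T < c := by
    have h1 := bx_up T hT0 good_before
    rw [one_mul] at h1
    have h2 : Real.exp T ≤ Real.exp Tb := Real.exp_le_exp.2 hTTb
    have h3 : x 0 * Real.exp T ≤ x 0 * Real.exp Tb :=
      mul_le_mul_of_nonneg_left h2 hx0pos.le
    calc x T ≤ x 0 * Real.exp Tb := h1.trans h3
      _ < c := hδbig
  have hxT0 : 0 < x T := by
    have h1 := bx_lo T hT0 good_before
    have := mul_pos hx0pos (Real.exp_pos (-(c + α * m) * T))
    linarith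
  have hyTε : ε ≤ y T := by
    have h1 := by_lo T hT0 good_before
    have h2 : (1:ℝ) ≤ Real.exp (δ * γ * T) :=
      Real.one_le_exp (by positivity)
    nlinarith
  by_cases hyTm : y T < m
  · exfalso
    have hPT : P T := ⟨hxT0, hxTc, hε.trans_le hyTε, hyTm⟩
    have hTnotbad : T ∉ Bad := fun h => h.2 hPT
    have hfreq := freq_bad hne hbdd hTnotbad
    have hle : nhdsWithin T (Set.Ioi T) ≤ nhdsWithin T (Set.Ici 0) :=
      nhdsWithin_mono T (fun u hu => hT0.trans (le_of_lt hu))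
    have hxc : ContinuousWithinAt x (Set.Ici 0) T := (hx T hT0).continuousWithinAt
    have hyc : ContinuousWithinAt y (Set.Ici 0) T := (hy T hT0).continuousWithinAt
    have hev : ∀ᶠ u in nhdsWithin T (Set.Ioi T), u ∉ Bad := by
      filter_upwards [hle (hxc (Ioi_mem_nhds hxT0)), hle (hxc (Iio_mem_nhds hxTc)),
        hle (hyc (Ioi_mem_nhds (hε.trans_le hyTε))), hle (hyc (Iio_mem_nhds hyTm))]
        with u h1 h2 h3 h4
      exact fun hb => hb.2 ⟨h1, h2, h3, h4⟩
    obtain ⟨u, hu1, hu2⟩ := (hfreq.and_eventually hev).exists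
    exact hu2 hu1
  · exact ⟨T, hT0, hxTc.le, not_lt.1 hyTm⟩


set_option maxHeartbeats 1000000 in
lemma case2_entry (α β δ c m M : ℝ) (x y : ℝ → ℝ)
    (hα : 0 < α) (hβ : 0 < β) (hδ : 0 < δ)
    (hc : 0 < c) (hcx0 : c < x 0)
    (hm : 0 < m) (hmM : m < M)
    (hγ : 0 < m - (1 - β * c))
    (hT1 : Real.log (M / m) / (δ * (m - (1 - β * c))) ≤ 1)
    (hδbig : c < x 0 * Real.exp (-((x 0 * Real.exp 1 + 1 + α * (M + 1)) *
      (Real.log (M / m) / (δ * (m - (1 - β * c)))))))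
    (hx : ∀ t ∈ Set.Ici (0 : ℝ),
      HasDerivWithinAt x (x t * (1 - x t - α * y t)) (Set.Ici 0) t)
    (hy : ∀ t ∈ Set.Ici (0 : ℝ),
      HasDerivWithinAt y (δ * y t * (1 - y t - β * x t)) (Set.Ici 0) t)
    (hy0m : m < y 0) (hy0M : y 0 ≤ M) :
    ∃ T, 0 ≤ T ∧ c ≤ x T ∧ y T ≤ m := by
  set γ := m - (1 - β * c) with hγdef
  set Tb := Real.log (M / m) / (δ * γ) with hTbdef
  set X := x 0 * Real.exp 1 + 1 with hXdef
  set L := X + α * (M + 1) with hLdef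
  have hM : 0 < M := hm.trans hmM
  have hx0pos : 0 < x 0 := hc.trans hcx0
  have hX : 0 < X := by positivity
  have hL : 0 < L := by positivity
  have hlog : 0 < Real.log (M / m) := Real.log_pos (by rw [lt_div_iff₀ hm]; linarith)
  have hδγ : 0 < δ * γ := mul_pos hδ hγ
  have hTb : 0 < Tb := div_pos hlog hδγ
  have hexpTb : Real.exp (-(δ * γ * Tb)) = m / M := by
    rw [hTbdef, mul_div_cancel₀ _ (ne_of_gt hδγ), Real.exp_neg,
      Real.exp_log (div_pos hM hm)]
    rw [inv_div]
  set P : ℝ → Prop := fun t => c < x t ∧ x t < X ∧ m < y t ∧ y t < M + 1 with hPdef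
  have hxI : ∀ T', 0 ≤ T' → ∀ t ∈ Set.Icc 0 T',
      HasDerivWithinAt x (x t * (1 - x t - α * y t)) (Set.Icc 0 T') t :=
    fun T' _ t ht => (hx t ht.1).mono Set.Icc_subset_Ici_self
  have hyI : ∀ T', 0 ≤ T' → ∀ t ∈ Set.Icc 0 T',
      HasDerivWithinAt y (δ * y t * (1 - y t - β * x t)) (Set.Icc 0 T') t :=
    fun T' _ t ht => (hy t ht.1).mono Set.Icc_subset_Ici_self
  have bx_up : ∀ T', 0 ≤ T' → (∀ u ∈ Set.Ioo (0:ℝ) T', P u) →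
      x T' ≤ x 0 * Real.exp (1 * T') := by
    intro T' hT' hP
    refine comp_le hT' (hxI T' hT') ?_
    intro t ht
    obtain ⟨p1, p2, p3, p4⟩ := hP t ht
    have q1 : 0 < x t := hc.trans p1
    have q3 : 0 < y t := hm.trans p3
    nlinarith [mul_pos q1 q3, mul_pos hα (mul_pos q1 q3), sq_nonneg (x t)]
  have bx_lo : ∀ T', 0 ≤ T' → (∀ u ∈ Set.Ioo (0:ℝ) T', P u) →
      x 0 * Real.exp (-L * T') ≤ x T' := by
    intro T' hT' hP
    refine comp_ge hT' (hxI T' hT') ?_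
    intro t ht
    obtain ⟨p1, p2, p3, p4⟩ := hP t ht
    have q1 : 0 < x t := hc.trans p1
    nlinarith [mul_pos q1 (sub_pos.2 p2), mul_pos hα (mul_pos q1 (sub_pos.2 p4))]
  have by_up0 : ∀ T', 0 ≤ T' → (∀ u ∈ Set.Ioo (0:ℝ) T', P u) →
      y T' ≤ y 0 * Real.exp (0 * T') := by
    intro T' hT' hP
    refine comp_le hT' (hyI T' hT') ?_
    intro t ht
    obtain ⟨p1, p2, p3, p4⟩ := hP t ht
    have q3 : 0 < y t := hm.trans p3
    have h5 : 1 - y t - β * x t ≤ -γ := by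
      rw [hγdef]; nlinarith [mul_pos hβ (sub_pos.2 p1)]
    nlinarith [mul_nonneg (mul_pos hδ q3).le (sub_nonneg.2 (h5.trans (by linarith)))]
  have by_up : ∀ T', 0 ≤ T' → (∀ u ∈ Set.Ioo (0:ℝ) T', P u) →
      y T' ≤ y 0 * Real.exp (-(δ * γ) * T') := by
    intro T' hT' hP
    refine comp_le hT' (hyI T' hT') ?_
    intro t ht
    obtain ⟨p1, p2, p3, p4⟩ := hP t ht
    have q3 : 0 < y t := hm.trans p3
    have h5 : 1 - y t - β * x t ≤ -γ := by
      rw [hγdef]; nlinarith [mul_pos hβ (sub_pos.2 p1)]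
    nlinarith [mul_nonneg (mul_pos hδ q3).le (sub_nonneg.2 h5)]
  set Bad : Set ℝ := {t | t ∈ Set.Icc 0 Tb ∧ ¬ P t} with hBaddef
  have he1 : (1:ℝ) ≤ Real.exp 1 := Real.one_le_exp (by norm_num)
  have hP0 : P 0 := ⟨hcx0, by nlinarith, hy0m, by linarith⟩
  have hne : Bad.Nonempty := by
    by_contra hemp
    rw [Set.not_nonempty_iff_eq_empty] at hemp
    have hPall : ∀ u ∈ Set.Icc (0:ℝ) Tb, P u := by
      intro u hu
      by_contra h
      have : u ∈ Bad := ⟨hu, h⟩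
      rw [hemp] at this
      exact this
    have h1 := by_up Tb hTb.le (fun u hu => hPall u (Set.Ioo_subset_Icc_self hu))
    rw [show -(δ * γ) * Tb = -(δ * γ * Tb) by ring, hexpTb] at h1
    have h2 : y 0 * (m / M) ≤ M * (m / M) :=
      mul_le_mul_of_nonneg_right hy0M (div_pos hm hM).le
    rw [mul_div_cancel₀ _ (ne_of_gt hM)] at h2
    have h4 := (hPall Tb (Set.right_mem_Icc.2 hTb.le)).2.2.1
    linarith
  have hbdd : BddBelow Bad := ⟨0, fun u hu => hu.1.1⟩
  set T := sInf Bad with hTdef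
  have hT0 : 0 ≤ T := le_csInf hne fun u hu => hu.1.1
  have hTTb : T ≤ Tb := by
    obtain ⟨b, hb⟩ := hne
    exact (csInf_le hbdd hb).trans hb.1.2
  have good_before : ∀ u ∈ Set.Ioo (0:ℝ) T, P u := by
    intro u hu
    by_contra h
    have : T ≤ u := csInf_le hbdd ⟨⟨hu.1.le, hu.2.le.trans hTTb⟩, h⟩
    exact absurd this (not_le.2 hu.2)
  have hxTX : x T < X := by
    have h1 := bx_up T hT0 good_before
    rw [one_mul] at h1
    have h2 : Real.exp T ≤ Real.exp 1 := Real.exp_le_exp.2 (hTTb.trans hT1)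
    nlinarith
  have hxTc : c < x T := by
    have h1 := bx_lo T hT0 good_before
    have h2 : Real.exp (-L * Tb) ≤ Real.exp (-L * T) :=
      Real.exp_le_exp.2 (by nlinarith)
    have h3 : x 0 * Real.exp (-L * Tb) ≤ x 0 * Real.exp (-L * T) :=
      mul_le_mul_of_nonneg_left h2 hx0pos.le
    have h4 : c < x 0 * Real.exp (-L * Tb) := by
      rw [show -L * Tb = -(L * Tb) by ring]
      exact hδbig
    linarith
  have hyTM : y T < M + 1 := by
    have h1 := by_up0 T hT0 good_before
    rw [zero_mul, Real.exp_zero, mul_one] at h1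
    linarith
  by_cases hyTm : m < y T
  · exfalso
    have hPT : P T := ⟨hxTc, hxTX, hyTm, hyTM⟩
    have hTnotbad : T ∉ Bad := fun h => h.2 hPT
    have hfreq := freq_bad hne hbdd hTnotbad
    have hle : nhdsWithin T (Set.Ioi T) ≤ nhdsWithin T (Set.Ici 0) :=
      nhdsWithin_mono T (fun u hu => hT0.trans (le_of_lt hu))
    have hxc : ContinuousWithinAt x (Set.Ici 0) T := (hx T hT0).continuousWithinAt
    have hyc : ContinuousWithinAt y (Set.Ici 0) T := (hy T hT0).continuousWithinAt
    have hev : ∀ᶠ u in nhdsWithin T (Set.Ioi T), u ∉ Bad := by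
      filter_upwards [hle (hxc (Ioi_mem_nhds hxTc)), hle (hxc (Iio_mem_nhds hxTX)),
        hle (hyc (Ioi_mem_nhds hyTm)), hle (hyc (Iio_mem_nhds hyTM))]
        with u h1 h2 h3 h4
      exact fun hb => hb.2 ⟨h1, h2, h3, h4⟩
    obtain ⟨u, hu1, hu2⟩ := (hfreq.and_eventually hev).exists
    exact hu2 hu1
  · exact ⟨T, hT0, hxTc.le, not_lt.1 hyTm⟩

end SepAux

set_option maxHeartbeats 4000000

/-- Limit of the separatrix as `δ → ∞`: if for each `δ > 0` the point
`(x₀, s δ)` lies on the stable manifold of the saddle `(A,B)` for the system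
with parameter `δ`, then `s δ → 0` as `δ → ∞` when `0 < x₀ < A`, and
`s δ → ∞` as `δ → ∞` when `x₀ > A`. -/
theorem stmt_19 (α β : ℝ) (hα : 1 < α) (hβ : 1 < β)
    (A B : ℝ) (hA : A = (α - 1) / (α * β - 1)) (hB : B = (β - 1) / (α * β - 1))
    (x₀ : ℝ) (hx₀ : 0 < x₀) (s : ℝ → ℝ)
    (hs : ∀ δ : ℝ, 0 < δ → 0 < s δ ∧
      ∃ x y : ℝ → ℝ,
        (∀ t ∈ Set.Ici (0 : ℝ),
          HasDerivWithinAt x (x t * (1 - x t - α * y t)) (Set.Ici 0) t) ∧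
        (∀ t ∈ Set.Ici (0 : ℝ),
          HasDerivWithinAt y (δ * y t * (1 - y t - β * x t)) (Set.Ici 0) t) ∧
        x 0 = x₀ ∧ y 0 = s δ ∧
        Tendsto (fun t => (x t, y t)) atTop (nhds (A, B))) :
    (x₀ < A → Tendsto s atTop (nhds 0)) ∧
    (A < x₀ → Tendsto s atTop atTop) := by
  have hα0 : 0 < α := by linarith
  have hβ0 : 0 < β := by linarith
  have hαβ : 0 < α * β - 1 := by nlinarith
  have hApos : 0 < A := by rw [hA]; exact div_pos (by linarith) hαβ
  have hA1 : A < 1 := by rw [hA, div_lt_one hαβ]; nlinarith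
  constructor
  · -- case x₀ < A
    intro hxA
    set c := (x₀ + A) / 2 with hcdef
    have hx0c : x₀ < c := by rw [hcdef]; linarith
    have hcA : c < A := by rw [hcdef]; linarith
    have hc0 : 0 < c := by rw [hcdef]; linarith
    have hc1 : c < 1 := hcA.trans hA1
    have hkey : (1 - c) / α < 1 - β * c := by
      have h1 : c * (α * β - 1) < α - 1 := by
        have h2 : c < (α - 1) / (α * β - 1) := hA ▸ hcA
        exact (lt_div_iff₀ hαβ).1 h2
      rw [div_lt_iff₀ hα0]
      linarith
    set m := ((1 - c) / α + (1 - β * c)) / 2 with hmdef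
    have hq : 0 < (1 - c) / α := div_pos (by linarith) hα0
    have hmlo : (1 - c) / α < m := by rw [hmdef]; linarith
    have hmhi : m < 1 - β * c := by rw [hmdef]; linarith
    have hm0 : 0 < m := hq.trans hmlo
    have hγ : 0 < 1 - m - β * c := by linarith
    have hcm : 1 - c - α * m < 0 := by
      rw [div_lt_iff₀ hα0] at hmlo
      linarith
    rw [tendsto_order]
    constructor
    · intro b hb
      filter_upwards [eventually_gt_atTop (0 : ℝ)] with δ hδ
      exact hb.trans_le (hs δ hδ).1.le
    · intro b hb
      set ε := min (b / 2) (m / 2) with hεdef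
      have hε0 : 0 < ε := lt_min (by linarith) (by linarith)
      have hεm : ε < m := (min_le_right _ _).trans_lt (by linarith)
      have hεb : ε < b := (min_le_left _ _).trans_lt (by linarith)
      have hlogc : 0 < Real.log (c / x₀) := Real.log_pos ((one_lt_div hx₀).2 hx0c)
      set Δ := max 1 (Real.log (m / ε) / ((1 - m - β * c) * Real.log (c / x₀))) with hΔdef
      filter_upwards [eventually_gt_atTop Δ] with δ hδΔ
      have hδ1 : (1 : ℝ) < δ := (le_max_left _ _).trans_lt hδΔ
      have hδ0 : 0 < δ := by linarith
      obtain ⟨hspos, x, y, hx, hy, hx0, hy0, hlim⟩ := hs δ hδ0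
      by_contra hcon
      push_neg at hcon
      have hεs : ε ≤ s δ := hεb.le.trans hcon
      have hδbig : x 0 * Real.exp (Real.log (m / ε) / (δ * (1 - m - β * c))) < c := by
        rw [hx0]
        have h1 : Real.log (m / ε) / (δ * (1 - m - β * c)) < Real.log (c / x₀) := by
          rw [div_lt_iff₀ (by positivity)]
          have h2 : Real.log (m / ε) / ((1 - m - β * c) * Real.log (c / x₀)) < δ :=
            (le_max_right _ _).trans_lt hδΔ
          rw [div_lt_iff₀ (by positivity)] at h2
          linarith
        have h3 : Real.exp (Real.log (m / ε) / (δ * (1 - m - β * c))) < c / x₀ := by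
          calc Real.exp (Real.log (m / ε) / (δ * (1 - m - β * c)))
              < Real.exp (Real.log (c / x₀)) := Real.exp_lt_exp.2 h1
            _ = c / x₀ := Real.exp_log (by positivity)
        calc x₀ * Real.exp (Real.log (m / ε) / (δ * (1 - m - β * c)))
            < x₀ * (c / x₀) := by exact mul_lt_mul_of_pos_left h3 hx₀
          _ = c := by field_simp
      obtain ⟨T, hT0, hTc, hTm⟩ : ∃ T, 0 ≤ T ∧ x T ≤ c ∧ m ≤ y T := by
        by_cases hym : y 0 < m
        · exact case1_entry α β δ c m ε x y hα0 hβ0 hδ0 hc0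
            (by rw [hx0]; exact hx₀) (by rw [hx0]; exact hx0c) hε0 hεm hγ hδbig hx hy
            (by rw [hy0]; exact hεs) hym
        · exact ⟨0, le_refl 0, by rw [hx0]; exact hx0c.le, not_lt.1 hym⟩
      have hinv := invariant (x := x) (y := y)
        (F := fun t => x t * (1 - x t - α * y t))
        (G := fun t => δ * y t * (1 - y t - β * x t))
        (c := c) (m := m) hT0 hx hy
        (fun t ht hxt hyt => by
          beta_reduce
          rw [hxt]
          refine mul_neg_of_pos_of_neg hc0 ?_
          have h9 := mul_le_mul_of_nonneg_left hyt hα0.le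
          linarith)
        (fun t ht hyt hxt => by
          beta_reduce
          rw [hyt]
          refine mul_pos (mul_pos hδ0 hm0) ?_
          have h9 := mul_le_mul_of_nonneg_left hxt hβ0.le
          linarith)
        hTc hTm
      have hlimx : Tendsto x atTop (nhds A) := by
        have := (Continuous.tendsto continuous_fst (A, B)).comp hlim
        exact this
      obtain ⟨t, ht1, ht2⟩ := ((hlimx.eventually (eventually_gt_nhds hcA)).and (eventually_ge_atTop T)).exists
      exact absurd (hinv t ht2).1 (not_le.2 ht1)
  · -- case A < x₀
    intro hAx
    set c := (A + min x₀ 1) / 2 with hcdef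
    have hAmin : A < min x₀ 1 := lt_min hAx hA1
    have hAc : A < c := by rw [hcdef]; linarith
    have hcmin : c < min x₀ 1 := by rw [hcdef]; linarith
    have hcx0 : c < x₀ := hcmin.trans_le (min_le_left _ _)
    have hc1 : c < 1 := hcmin.trans_le (min_le_right _ _)
    have hc0 : 0 < c := hApos.trans hAc
    have hkey : 1 - β * c < (1 - c) / α := by
      have h1 : α - 1 < c * (α * β - 1) := by
        have h2 : (α - 1) / (α * β - 1) < c := hA ▸ hAc
        exact (div_lt_iff₀ hαβ).1 h2
      rw [lt_div_iff₀ hα0]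
      linarith
    have hq : 0 < (1 - c) / α := div_pos (by linarith) hα0
    set m := (max (1 - β * c) 0 + (1 - c) / α) / 2 with hmdef
    have hm1 : 1 - β * c < m := by
      have := le_max_left (1 - β * c) 0
      rw [hmdef]; linarith
    have hm0 : 0 < m := by
      have := le_max_right (1 - β * c) 0
      rw [hmdef]; linarith
    have hmhi : m < (1 - c) / α := by
      have h1 : max (1 - β * c) 0 < (1 - c) / α := max_lt hkey hq
      rw [hmdef]; linarith
    have hγ2 : 0 < m - (1 - β * c) := by linarith
    have hcm2 : 0 < 1 - c - α * m := by
      rw [lt_div_iff₀ hα0] at hmhi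
      linarith
    rw [tendsto_atTop]
    intro b
    set M := max b (m + 1) with hMdef
    have hmM : m < M := by
      have := le_max_right b (m + 1)
      rw [hMdef]; linarith
    have hM0 : 0 < M := hm0.trans hmM
    set X := x₀ * Real.exp 1 + 1 with hXdef
    set L := X + α * (M + 1) with hLdef
    have hX : 0 < X := by positivity
    have hL : 0 < L := by positivity
    have hlogx : 0 < Real.log (x₀ / c) := Real.log_pos ((one_lt_div hc0).2 hcx0)
    have hlogM : 0 < Real.log (M / m) := Real.log_pos (by rw [lt_div_iff₀ hm0]; linarith)
    set Δ := max (Real.log (M / m) / (m - (1 - β * c)))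
      (L * Real.log (M / m) / ((m - (1 - β * c)) * Real.log (x₀ / c))) with hΔdef
    filter_upwards [eventually_gt_atTop (max Δ 0)] with δ hδΔ
    have hδ0 : 0 < δ := (le_max_right Δ 0).trans_lt hδΔ
    have hδΔ' : Δ < δ := (le_max_left Δ 0).trans_lt hδΔ
    obtain ⟨hspos, x, y, hx, hy, hx0, hy0, hlim⟩ := hs δ hδ0
    by_contra hcon
    push_neg at hcon
    have hsM : s δ ≤ M := hcon.le.trans (le_max_left _ _)
    have hδγ2 : 0 < δ * (m - (1 - β * c)) := mul_pos hδ0 hγ2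
    have hT1 : Real.log (M / m) / (δ * (m - (1 - β * c))) ≤ 1 := by
      rw [div_le_one hδγ2]
      have h2 : Real.log (M / m) / (m - (1 - β * c)) < δ :=
        ((le_max_left _ _).trans_lt hδΔ')
      rw [div_lt_iff₀ hγ2] at h2
      linarith
    have hδbig : c < x 0 * Real.exp (-((x 0 * Real.exp 1 + 1 + α * (M + 1)) *
        (Real.log (M / m) / (δ * (m - (1 - β * c)))))) := by
      rw [hx0]
      have hLeq : x₀ * Real.exp 1 + 1 + α * (M + 1) = L := by rw [hLdef, hXdef]
      rw [hLeq]
      have h1 : L * (Real.log (M / m) / (δ * (m - (1 - β * c)))) < Real.log (x₀ / c) := by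
        have h2 : L * Real.log (M / m) / ((m - (1 - β * c)) * Real.log (x₀ / c)) < δ :=
          (le_max_right _ _).trans_lt hδΔ'
        rw [div_lt_iff₀ (by positivity)] at h2
        rw [← mul_div_assoc, div_lt_iff₀ hδγ2]
        linarith
      have h3 : Real.log (c / x₀) < -(L * (Real.log (M / m) / (δ * (m - (1 - β * c))))) := by
        have : Real.log (c / x₀) = -Real.log (x₀ / c) := by
          rw [← Real.log_inv, inv_div]
        rw [this]
        linarith
      have h4 : c / x₀ < Real.exp (-(L * (Real.log (M / m) / (δ * (m - (1 - β * c)))))) := by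
        calc c / x₀ = Real.exp (Real.log (c / x₀)) := (Real.exp_log (by positivity)).symm
          _ < _ := Real.exp_lt_exp.2 h3
      calc c = x₀ * (c / x₀) := by field_simp
        _ < _ := by exact mul_lt_mul_of_pos_left h4 hx₀
    obtain ⟨T, hT0, hTc, hTm⟩ : ∃ T, 0 ≤ T ∧ c ≤ x T ∧ y T ≤ m := by
      by_cases hym : m < y 0
      · exact case2_entry α β δ c m M x y hα0 hβ0 hδ0 hc0
          (by rw [hx0]; exact hcx0) hm0 hmM hγ2 hT1 hδbig hx hy hym
          (by rw [hy0]; exact hsM)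
      · exact ⟨0, le_refl 0, by rw [hx0]; exact hcx0.le, not_lt.1 hym⟩
    have hinv := invariant (x := fun t => -x t) (y := fun t => -y t)
      (F := fun t => -(x t * (1 - x t - α * y t)))
      (G := fun t => -(δ * y t * (1 - y t - β * x t)))
      (c := -c) (m := -m) hT0
      (fun t ht => (hx t ht).neg) (fun t ht => (hy t ht).neg)
      (fun t ht hxt hyt => by
        beta_reduce at hxt hyt ⊢
        have h1 : x t = c := by linarith [neg_inj.1 hxt]
        have h2 : y t ≤ m := by linarith
        rw [h1, neg_lt_zero]
        refine mul_pos hc0 ?_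
        have h9 := mul_le_mul_of_nonneg_left h2 hα0.le
        linarith)
      (fun t ht hyt hxt => by
        beta_reduce at hyt hxt ⊢
        have h1 : y t = m := by linarith [neg_inj.1 hyt]
        have h2 : c ≤ x t := by linarith
        rw [h1, lt_neg, neg_zero]
        refine mul_neg_of_pos_of_neg (mul_pos hδ0 hm0) ?_
        have h9 := mul_le_mul_of_nonneg_left h2 hβ0.le
        linarith)
      (by beta_reduce; linarith) (by beta_reduce; linarith)
    have hlimx : Tendsto x atTop (nhds A) := by
      have := (Continuous.tendsto continuous_fst (A, B)).comp hlim
      exact this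
    obtain ⟨t, ht1, ht2⟩ := ((hlimx.eventually (eventually_lt_nhds hAc)).and (eventually_ge_atTop T)).exists
    have := (hinv t ht2).1
    simp only [neg_le_neg_iff] at this
    exact absurd this (not_le.2 ht1)
end
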